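/- Failure of monotonicity on average: there exists a state ρ = η|0⟩⟨0|⊗ρ_Ent + (1−η)|1⟩⟨1|⊗ρ_Sep with η ≤ ε/D_tr(ρ_Ent, ρ_Sep) such that E_ε(ρ) = 0 (since the separable state |1⟩⟨1|⊗ρ_Sep is within trace distance ε of ρ), while the local projective measurement on the ancilla yields outcomes ρ_Ent with probability η and ρ_Sep with probability 1−η, giving average ε-entanglement η·E_ε(ρ_Ent) > 0. Hence Σᵢ pᵢ E_ε(ρᵢ) > E_ε(ρ). -/

import Mathlib

open Kronecker ComplexOrder Matrix

/-- The trace norm `tr|A| = tr √(AᴴA)` of a complex matrix. -/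
noncomputable def traceNorm {n : Type*} [Fintype n] [DecidableEq n]
    (A : Matrix n n ℂ) : ℝ :=
  (((Matrix.posSemidef_conjTranspose_mul_self A).1.eigenvectorUnitary : Matrix n n ℂ) *
      Matrix.diagonal (((↑) : ℝ → ℂ) ∘ Real.sqrt ∘ (Matrix.posSemidef_conjTranspose_mul_self A).1.eigenvalues) *
      (star (Matrix.posSemidef_conjTranspose_mul_self A).1.eigenvectorUnitary : Matrix n n ℂ)).trace.re

/-- The trace distance `D_tr(ρ,σ) = ½ tr|ρ − σ|`. -/
noncomputable def traceDist {n : Type*} [Fintype n] [DecidableEq n]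
    (ρ σ : Matrix n n ℂ) : ℝ :=
  traceNorm (ρ - σ) / 2

lemma conjTranspose_kron {l m n p : Type*} (X : Matrix l m ℂ) (Y : Matrix n p ℂ) :
    (X ⊗ₖ Y)ᴴ = Xᴴ ⊗ₖ Yᴴ := by
  ext ⟨i, j⟩ ⟨k, l⟩
  simp [Matrix.conjTranspose_apply, mul_comm]

lemma psd_smul {n : Type*} [Fintype n] {A : Matrix n n ℂ} (hA : A.PosSemidef)
    {η : ℝ} (hη : 0 ≤ η) : ((η : ℂ) • A).PosSemidef := by
  refine ⟨?_, fun x => ?_⟩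
  · rw [Matrix.IsHermitian, Matrix.conjTranspose_smul, hA.1.eq]
    simp
  · exact (hA.smul (Complex.zero_le_real.mpr hη)).2 x

open scoped MatrixOrder in
lemma psd_kron {d : ℕ} (i : Fin 2) {A : Matrix (Fin d) (Fin d) ℂ} (hA : A.PosSemidef) :
    (Matrix.single i i (1 : ℂ) ⊗ₖ A).PosSemidef := by
  have h1 : Matrix.single i i (1 : ℂ) ⊗ₖ A
      = (Matrix.single i i (1 : ℂ) ⊗ₖ CFC.sqrt A)ᴴ *
        (Matrix.single i i (1 : ℂ) ⊗ₖ CFC.sqrt A) := by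
    rw [conjTranspose_kron, ← Matrix.mul_kronecker_mul, (CFC.sqrt_nonneg A).posSemidef.1.eq,
      CFC.sqrt_mul_sqrt_self A hA.nonneg]
    ext ⟨a1, a2⟩ ⟨b1, b2⟩
    fin_cases i <;> fin_cases a1 <;> fin_cases b1 <;>
      simp [Matrix.conjTranspose_apply, Matrix.mul_apply, Matrix.single,
        Fin.sum_univ_two]
  rw [h1]
  exact Matrix.posSemidef_conjTranspose_mul_self _

lemma trace_e (i : Fin 2) : (Matrix.single i i (1 : ℂ)).trace = 1 := by
  exact Matrix.trace_single_eq_same i (1 : ℂ)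

open scoped MatrixOrder in
lemma key_traceNorm {d : ℕ} {A B : Matrix (Fin d) (Fin d) ℂ}
    (hA : A.PosSemidef) (hAtr : A.trace = 1)
    (hB : B.PosSemidef) (hBtr : B.trace = 1)
    {η : ℝ} (hη : 0 ≤ η) :
    traceNorm ((η : ℂ) • (Matrix.single (0 : Fin 2) (0 : Fin 2) (1 : ℂ) ⊗ₖ A)
      - (η : ℂ) • (Matrix.single (1 : Fin 2) (1 : Fin 2) (1 : ℂ) ⊗ₖ B)) = 2 * η := by
  set e0 : Matrix (Fin 2) (Fin 2) ℂ := Matrix.single (0 : Fin 2) (0 : Fin 2) (1 : ℂ)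
  set e1 : Matrix (Fin 2) (Fin 2) ℂ := Matrix.single (1 : Fin 2) (1 : Fin 2) (1 : ℂ)
  set M : Matrix (Fin 2 × Fin d) (Fin 2 × Fin d) ℂ :=
    (η : ℂ) • (e0 ⊗ₖ A) - (η : ℂ) • (e1 ⊗ₖ B)
  set S : Matrix (Fin 2 × Fin d) (Fin 2 × Fin d) ℂ :=
    (η : ℂ) • (e0 ⊗ₖ A + e1 ⊗ₖ B)
  have he0 : e0 * e0 = e0 := by simp [e0]
  have he1 : e1 * e1 = e1 := by simp [e1]
  have he01 : e0 * e1 = 0 := by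
    simp only [e0, e1]
    simp
  have he10 : e1 * e0 = 0 := by
    simp only [e0, e1]
    simp
  have hSpsd : S.PosSemidef := psd_smul ((psd_kron 0 hA).add (psd_kron 1 hB)) hη
  have hMH : Mᴴ = M := by
    simp only [M, Matrix.conjTranspose_sub, Matrix.conjTranspose_smul, conjTranspose_kron]
    have h0 : e0ᴴ = e0 := by
      ext a b; simp [e0, Matrix.conjTranspose_apply, Matrix.single, and_comm]
    have h1 : e1ᴴ = e1 := by
      ext a b; simp [e1, Matrix.conjTranspose_apply, Matrix.single, and_comm]
    rw [h0, h1, hA.1.eq, hB.1.eq]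
    simp
  have hsq : S ^ 2 = Mᴴ * M := by
    rw [hMH]
    simp only [S, M, pow_two, Matrix.smul_mul, Matrix.mul_smul, smul_smul,
      Matrix.sub_mul, Matrix.mul_sub, Matrix.add_mul, Matrix.mul_add,
      ← Matrix.mul_kronecker_mul, he0, he1, he01, he10,
      Matrix.zero_kronecker, smul_zero]
    simp only [smul_sub, smul_add]
    abel_nf
    simp
  have hsqrt : ((Matrix.posSemidef_conjTranspose_mul_self M).1.eigenvectorUnitary :
        Matrix (Fin 2 × Fin d) (Fin 2 × Fin d) ℂ) *
      Matrix.diagonal (((↑) : ℝ → ℂ) ∘ Real.sqrt ∘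
        (Matrix.posSemidef_conjTranspose_mul_self M).1.eigenvalues) *
      (star (Matrix.posSemidef_conjTranspose_mul_self M).1.eigenvectorUnitary :
        Matrix (Fin 2 × Fin d) (Fin 2 × Fin d) ℂ) = S := by
    have h1 := (Matrix.posSemidef_conjTranspose_mul_self M).1.cfc_eq Real.sqrt
    have h2 : cfc Real.sqrt (Mᴴ * M) = S := by
      have := CFC.sqrt_sq S hSpsd.nonneg
      rwa [hsq, CFC.sqrt_eq_real_sqrt _ (Matrix.posSemidef_conjTranspose_mul_self M).nonneg,
        cfcₙ_eq_cfc (f := Real.sqrt) (hf0 := Real.sqrt_zero)] at this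
    rw [h2, Matrix.IsHermitian.cfc, Unitary.conjStarAlgAut_apply] at h1
    exact h1.symm
  unfold traceNorm
  rw [hsqrt]
  simp only [S, e0, e1, Matrix.trace_smul, Matrix.trace_add, Matrix.trace_kronecker,
    trace_e, hAtr, hBtr, smul_eq_mul, mul_one, one_mul]
  rw [show (1:ℂ) + 1 = 2 by norm_num]
  simp
  ring

theorem stmt18 {d : ℕ}
    (ρEnt ρSep : Matrix (Fin d) (Fin d) ℂ)
    (hEnt : ρEnt.PosSemidef) (hEnttr : ρEnt.trace = 1)
    (hSep : ρSep.PosSemidef) (hSeptr : ρSep.trace = 1)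
    (Esys : Matrix (Fin d) (Fin d) ℂ → ℝ)
    (Ecomp : Matrix (Fin 2 × Fin d) (Fin 2 × Fin d) ℂ → ℝ)
    (ε : ℝ) (hε : 0 < ε)
    (hEcompnn : ∀ τ, 0 ≤ Ecomp τ)
    (hEcompSep :
      Ecomp (Matrix.single (1 : Fin 2) (1 : Fin 2) (1 : ℂ) ⊗ₖ ρSep) = 0)
    (hEepsEntPos : 0 < sInf (Esys '' {σ | traceDist ρEnt σ ≤ ε}))
    (hEepsSep0 : sInf (Esys '' {σ | traceDist ρSep σ ≤ ε}) = 0)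
    (hDpos : 0 < traceDist ρEnt ρSep) :
    ∃ η : ℝ, 0 < η ∧ η ≤ ε / traceDist ρEnt ρSep ∧
      sInf (Ecomp ''
          {σ | traceDist
            ((η : ℂ) • (Matrix.single (0 : Fin 2) (0 : Fin 2) (1 : ℂ) ⊗ₖ ρEnt) +
              ((1 - η : ℝ) : ℂ) •
                (Matrix.single (1 : Fin 2) (1 : Fin 2) (1 : ℂ) ⊗ₖ ρSep)) σ ≤ ε})
        = 0 ∧
      η * sInf (Esys '' {σ | traceDist ρEnt σ ≤ ε}) +
          (1 - η) * sInf (Esys '' {σ | traceDist ρSep σ ≤ ε}) >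
        sInf (Ecomp ''
          {σ | traceDist
            ((η : ℂ) • (Matrix.single (0 : Fin 2) (0 : Fin 2) (1 : ℂ) ⊗ₖ ρEnt) +
              ((1 - η : ℝ) : ℂ) •
                (Matrix.single (1 : Fin 2) (1 : Fin 2) (1 : ℂ) ⊗ₖ ρSep)) σ ≤ ε}) := by
  set η : ℝ := min ε (ε / traceDist ρEnt ρSep) with hηdef
  have hηpos : 0 < η := lt_min hε (div_pos hε hDpos)
  refine ⟨η, hηpos, min_le_right _ _, ?_⟩
  have hdist : traceDist
      ((η : ℂ) • (Matrix.single (0 : Fin 2) (0 : Fin 2) (1 : ℂ) ⊗ₖ ρEnt) +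
        ((1 - η : ℝ) : ℂ) •
          (Matrix.single (1 : Fin 2) (1 : Fin 2) (1 : ℂ) ⊗ₖ ρSep))
      (Matrix.single (1 : Fin 2) (1 : Fin 2) (1 : ℂ) ⊗ₖ ρSep) = η := by
    rw [traceDist]
    have hre : ((η : ℂ) • (Matrix.single (0 : Fin 2) (0 : Fin 2) (1 : ℂ) ⊗ₖ ρEnt) +
        ((1 - η : ℝ) : ℂ) •
          (Matrix.single (1 : Fin 2) (1 : Fin 2) (1 : ℂ) ⊗ₖ ρSep))
        - Matrix.single (1 : Fin 2) (1 : Fin 2) (1 : ℂ) ⊗ₖ ρSep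
        = (η : ℂ) • (Matrix.single (0 : Fin 2) (0 : Fin 2) (1 : ℂ) ⊗ₖ ρEnt)
          - (η : ℂ) • (Matrix.single (1 : Fin 2) (1 : Fin 2) (1 : ℂ) ⊗ₖ ρSep) := by
      rw [sub_eq_iff_eq_add]
      push_cast
      module
    rw [hre, key_traceNorm hEnt hEnttr hSep hSeptr hηpos.le]
    ring
  have hmem : (Matrix.single (1 : Fin 2) (1 : Fin 2) (1 : ℂ) ⊗ₖ ρSep) ∈
      {σ | traceDist
        ((η : ℂ) • (Matrix.single (0 : Fin 2) (0 : Fin 2) (1 : ℂ) ⊗ₖ ρEnt) +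
          ((1 - η : ℝ) : ℂ) •
            (Matrix.single (1 : Fin 2) (1 : Fin 2) (1 : ℂ) ⊗ₖ ρSep)) σ ≤ ε} := by
    rw [Set.mem_setOf_eq, hdist]
    exact min_le_left _ _
  have hInf0 : sInf (Ecomp ''
      {σ | traceDist
        ((η : ℂ) • (Matrix.single (0 : Fin 2) (0 : Fin 2) (1 : ℂ) ⊗ₖ ρEnt) +
          ((1 - η : ℝ) : ℂ) •
            (Matrix.single (1 : Fin 2) (1 : Fin 2) (1 : ℂ) ⊗ₖ ρSep)) σ ≤ ε}) = 0 := by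
    apply le_antisymm
    · rw [← hEcompSep]
      exact csInf_le ⟨0, fun x ⟨τ, _, h⟩ => h ▸ hEcompnn τ⟩ ⟨_, hmem, rfl⟩
    · exact le_csInf ⟨_, ⟨_, hmem, rfl⟩⟩ (fun x ⟨τ, _, h⟩ => h ▸ hEcompnn τ)
  refine ⟨hInf0, ?_⟩
  rw [hInf0, hEepsSep0, mul_zero, add_zero]
  exact mul_pos hηpos hEepsEntPos
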